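/- Let g ∈ GL_d(𝕂) (𝕂 = ℝ or ℂ) with singular values σ₁(g) ≥ … ≥ σ_d(g). Then for any two unit vectors v₁, v₂ ∈ 𝕂^d, the Fubini–Study distance satisfies d_ℙ([gv₁], [gv₂]) ≥ (2/π) · (σ_d(g)σ_{d−1}(g)/σ₁(g)²) · d_ℙ([v₁], [v₂]). -/

import Mathlib

open scoped RealInnerProductSpace

/-- The Fubini–Study distance on `ℙ(𝕂^d)`, computed on representative vectors. -/
noncomputable def dProj {𝕂 : Type*} [RCLike 𝕂] {d : ℕ} (v w : EuclideanSpace 𝕂 (Fin d)) : ℝ :=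
  Real.arccos (‖(inner 𝕂 v w : 𝕂)‖ / (‖v‖ * ‖w‖))

/-- `σ` is the non-increasing list of singular values of `g`, i.e. the square roots of the
eigenvalues of `g gᴴ`. -/
def IsSingValues {𝕂 : Type*} [RCLike 𝕂] {d : ℕ} (g : Matrix (Fin d) (Fin d) 𝕂)
    (σ : Fin d → ℝ) : Prop :=
  Antitone σ ∧ ∃ e : Equiv.Perm (Fin d), ∀ i,
    σ i = Real.sqrt ((Matrix.isHermitian_mul_conjTranspose_self g).eigenvalues (e i))

open scoped Matrix

section Aux

variable {𝕂 : Type*} [RCLike 𝕂] {d : ℕ}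

private lemma fsAux_lagrangeK (μ x y : Fin d → 𝕂) (hμ : ∀ i, starRingEnd 𝕂 (μ i) = μ i) :
    (∑ i, μ i * (starRingEnd 𝕂 (x i) * x i)) * (∑ j, μ j * (starRingEnd 𝕂 (y j) * y j))
      - starRingEnd 𝕂 (∑ i, μ i * (starRingEnd 𝕂 (x i) * y i)) *
          (∑ j, μ j * (starRingEnd 𝕂 (x j) * y j))
    = (2 : 𝕂)⁻¹ * ∑ i, ∑ j, μ i * μ j *
        (starRingEnd 𝕂 (x i * y j - x j * y i) * (x i * y j - x j * y i)) := by
  have hconj : starRingEnd 𝕂 (∑ i, μ i * (starRingEnd 𝕂 (x i) * y i))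
      = ∑ i, μ i * (x i * starRingEnd 𝕂 (y i)) := by
    rw [map_sum]
    refine Finset.sum_congr rfl fun i _ => ?_
    simp [map_mul, hμ]
    try ring
  set F : Fin d → Fin d → 𝕂 := fun i j =>
    (μ i * (starRingEnd 𝕂 (x i) * x i)) * (μ j * (starRingEnd 𝕂 (y j) * y j))
      - (μ i * (x i * starRingEnd 𝕂 (y i))) * (μ j * (starRingEnd 𝕂 (x j) * y j)) with hF
  have hL : (∑ i, μ i * (starRingEnd 𝕂 (x i) * x i)) * (∑ j, μ j * (starRingEnd 𝕂 (y j) * y j))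
      - starRingEnd 𝕂 (∑ i, μ i * (starRingEnd 𝕂 (x i) * y i)) *
          (∑ j, μ j * (starRingEnd 𝕂 (x j) * y j))
      = ∑ i, ∑ j, F i j := by
    rw [hconj, Finset.sum_mul_sum, Finset.sum_mul_sum, ← Finset.sum_sub_distrib]
    exact Finset.sum_congr rfl fun i _ => by rw [← Finset.sum_sub_distrib]
  rw [hL]
  have key : ∀ i j, F i j + F j i
      = μ i * μ j * (starRingEnd 𝕂 (x i * y j - x j * y i) * (x i * y j - x j * y i)) := by
    intro i j
    simp only [hF, map_sub, map_mul]
    ring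
  have h2 : (∑ i, ∑ j, F i j) + (∑ i, ∑ j, F i j)
      = ∑ i, ∑ j, μ i * μ j *
        (starRingEnd 𝕂 (x i * y j - x j * y i) * (x i * y j - x j * y i)) := by
    conv_lhs => rw [show (∑ i, ∑ j, F i j) + (∑ i, ∑ j, F i j)
      = (∑ i, ∑ j, F i j) + (∑ j, ∑ i, F i j) from by rw [Finset.sum_comm]]
    rw [← Finset.sum_add_distrib]
    refine Finset.sum_congr rfl fun i _ => ?_
    rw [← Finset.sum_add_distrib]
    exact Finset.sum_congr rfl fun j _ => key i j
  rw [← h2]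
  ring

private lemma fsAux_lagrangeR (μ : Fin d → ℝ) (x y : Fin d → 𝕂) :
    (∑ i, μ i * ‖x i‖^2) * (∑ j, μ j * ‖y j‖^2)
      - ‖∑ i, (μ i : 𝕂) * (starRingEnd 𝕂 (x i) * y i)‖^2
    = 2⁻¹ * ∑ i, ∑ j, μ i * μ j * ‖x i * y j - x j * y i‖^2 := by
  have h := fsAux_lagrangeK (𝕂 := 𝕂) (fun i => (μ i : 𝕂)) x y (fun i => RCLike.conj_ofReal _)
  simp only [RCLike.conj_mul] at h
  rw [show ((2:𝕂))⁻¹ = ((2⁻¹ : ℝ) : 𝕂) from by rw [RCLike.ofReal_inv, RCLike.ofReal_ofNat]] at h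
  exact_mod_cast h

private lemma fsAux_coreIneq (μ : Fin d → ℝ) (x y : Fin d → 𝕂) (M : ℝ)
    (h2 : ∀ i j, i ≠ j → μ i * μ j ≤ M) :
    (∑ i, μ i * ‖x i‖^2) * (∑ j, μ j * ‖y j‖^2)
      - ‖∑ i, (μ i : 𝕂) * (starRingEnd 𝕂 (x i) * y i)‖^2
    ≤ M * ((∑ i, ‖x i‖^2) * (∑ j, ‖y j‖^2) - ‖∑ i, starRingEnd 𝕂 (x i) * y i‖^2) := by
  have h1 : (∑ i, ‖x i‖^2) * (∑ j, ‖y j‖^2) - ‖∑ i, starRingEnd 𝕂 (x i) * y i‖^2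
      = 2⁻¹ * ∑ i, ∑ j, ‖x i * y j - x j * y i‖^2 := by
    have := fsAux_lagrangeR (𝕂 := 𝕂) (fun _ => (1:ℝ)) x y
    simpa using this
  rw [fsAux_lagrangeR, h1, mul_left_comm]
  refine mul_le_mul_of_nonneg_left ?_ (by norm_num)
  rw [Finset.mul_sum]
  refine Finset.sum_le_sum fun i _ => ?_
  rw [Finset.mul_sum]
  refine Finset.sum_le_sum fun j _ => ?_
  rcases eq_or_ne i j with rfl | hij
  · simp
  · exact mul_le_mul_of_nonneg_right (h2 i j hij) (by positivity)

private lemma fsAux_re_sum_weight (c : Fin d → ℝ) (z : Fin d → 𝕂) :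
    RCLike.re (∑ i, (c i : 𝕂) * (starRingEnd 𝕂 (z i) * z i)) = ∑ i, c i * ‖z i‖^2 := by
  rw [map_sum]
  exact Finset.sum_congr rfl fun i _ => by
    rw [RCLike.conj_mul, ← RCLike.ofReal_pow, ← RCLike.ofReal_mul, RCLike.ofReal_re]

private lemma fsAux_re_sum_self (z : Fin d → 𝕂) :
    RCLike.re (∑ i, starRingEnd 𝕂 (z i) * z i) = ∑ i, ‖z i‖^2 := by
  rw [map_sum]
  exact Finset.sum_congr rfl fun i _ => by rw [RCLike.conj_mul, ← RCLike.ofReal_pow, RCLike.ofReal_re]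

private lemma fsAux_adj (M : Matrix (Fin d) (Fin d) 𝕂) (a b : Fin d → 𝕂) :
    dotProduct (star (M *ᵥ a)) b = dotProduct (star a) (Mᴴ *ᵥ b) := by
  rw [Matrix.star_mulVec, ← Matrix.dotProduct_mulVec]

private lemma fsAux_dot (z w : Fin d → 𝕂) :
    dotProduct (star z) w = ∑ i, starRingEnd 𝕂 (z i) * w i := by
  simp [dotProduct, RCLike.star_def]

end Aux

/-- For `g ∈ GL_d(𝕂)` and unit vectors `v₁, v₂`,
`d_ℙ([gv₁],[gv₂]) ≥ (2/π)·(σ_d(g)σ_{d−1}(g)/σ₁(g)²)·d_ℙ([v₁],[v₂])`. -/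
theorem fubiniStudy_lower_bound {𝕂 : Type*} [RCLike 𝕂] {d : ℕ} (hd : 2 ≤ d)
    (g : Matrix (Fin d) (Fin d) 𝕂) (hg : IsUnit g)
    (σ : Fin d → ℝ) (hσ : IsSingValues g σ)
    (v₁ v₂ : EuclideanSpace 𝕂 (Fin d)) (h1 : ‖v₁‖ = 1) (h2 : ‖v₂‖ = 1) :
    dProj (Matrix.toEuclideanLin g v₁) (Matrix.toEuclideanLin g v₂) ≥
      (2 / Real.pi) * (σ ⟨d - 1, by omega⟩ * σ ⟨d - 2, by omega⟩ / (σ ⟨0, by omega⟩) ^ 2) *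
        dProj v₁ v₂ := by
  classical
  obtain ⟨hanti, e, he⟩ := hσ
  set lam : Fin d → ℝ := (Matrix.isHermitian_mul_conjTranspose_self g).eigenvalues with hlamdef
  set U : Matrix (Fin d) (Fin d) 𝕂 :=
    ((Matrix.isHermitian_mul_conjTranspose_self g).eigenvectorUnitary :
      Matrix (Fin d) (Fin d) 𝕂) with hUdef
  have hU1 : U * star U = 1 :=
    Matrix.mem_unitaryGroup_iff.mp
      ((Matrix.isHermitian_mul_conjTranspose_self g).eigenvectorUnitary).2
  have hU2 : star U * U = 1 :=
    Matrix.mem_unitaryGroup_iff'.mp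
      ((Matrix.isHermitian_mul_conjTranspose_self g).eigenvectorUnitary).2
  -- eigenvalues are positive
  have hdet0 : (g * gᴴ).det ≠ 0 := by
    rcases (Matrix.isUnit_iff_isUnit_det g).mp hg with hdet
    rw [Matrix.det_mul, Matrix.det_conjTranspose]
    exact mul_ne_zero hdet.ne_zero (star_ne_zero.mpr hdet.ne_zero)
  have hlampos : ∀ i, 0 < lam i := by
    intro i
    have h0 : 0 ≤ lam i := Matrix.eigenvalues_self_mul_conjTranspose_nonneg g i
    rcases h0.eq_or_lt with h | h
    · exfalso
      apply hdet0
      rw [(Matrix.isHermitian_mul_conjTranspose_self g).det_eq_prod_eigenvalues]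
      refine Finset.prod_eq_zero (Finset.mem_univ i) ?_
      rw [show ((Matrix.isHermitian_mul_conjTranspose_self g).eigenvalues i) = lam i from rfl,
        ← h]
      simp
    · exact h
  -- singular value facts
  have hσe : ∀ i, σ (e.symm i) = Real.sqrt (lam i) := fun i => by
    rw [he (e.symm i), Equiv.apply_symm_apply]
  have hσpos : ∀ j, 0 < σ j := fun j => by
    rw [he j]; exact Real.sqrt_pos.mpr (hlampos _)
  have hσsq : ∀ i, σ (e.symm i) ^ 2 = lam i := fun i => by
    rw [hσe i]; exact Real.sq_sqrt (hlampos i).le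
  set S := σ ⟨0, by omega⟩ with hSdef
  set s1 := σ ⟨d - 1, by omega⟩ with hs1def
  set s2 := σ ⟨d - 2, by omega⟩ with hs2def
  have hSpos : 0 < S := hσpos _
  have hs1pos : 0 < s1 := hσpos _
  have hs2pos : 0 < s2 := hσpos _
  have hlam_le : ∀ i, lam i ≤ S ^ 2 := by
    intro i
    rw [← hσsq i]
    exact pow_le_pow_left₀ (hσpos _).le (hanti (by simp [Fin.le_def])) 2
  have hlam_ge : ∀ i, s1 ^ 2 ≤ lam i := by
    intro i
    rw [← hσsq i]
    refine pow_le_pow_left₀ hs1pos.le (hanti ?_) 2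
    rw [Fin.le_def]
    have := (e.symm i).isLt
    simp only []
    omega
  have hkey : ∀ a b : Fin d, (a : ℕ) < (b : ℕ) → s1 * s2 ≤ σ a * σ b := by
    intro a b hab
    have hb : (b : ℕ) ≤ d - 1 := by have := b.isLt; omega
    have ha : (a : ℕ) ≤ d - 2 := by have := b.isLt; omega
    calc s1 * s2 = s2 * s1 := mul_comm _ _
      _ ≤ σ a * σ b :=
        mul_le_mul (hanti (by rw [Fin.le_def]; exact ha)) (hanti (by rw [Fin.le_def]; exact hb))
          hs1pos.le (hσpos _).le
  have hpair : ∀ i j, i ≠ j → (s1 * s2) ^ 2 ≤ lam i * lam j := by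
    intro i j hij
    rw [← hσsq i, ← hσsq j, ← mul_pow]
    have hab : e.symm i ≠ e.symm j := fun h => hij (by simpa using congrArg e h)
    refine pow_le_pow_left₀ (by positivity) ?_ 2
    rcases lt_or_gt_of_ne (fun h : ((e.symm i : ℕ)) = (e.symm j : ℕ) => hab (Fin.ext h)) with hlt | hlt
    · exact hkey _ _ hlt
    · rw [mul_comm (σ (e.symm i))]
      exact hkey _ _ hlt
  -- the coordinates
  set X : EuclideanSpace 𝕂 (Fin d) → (Fin d → 𝕂) :=
    fun v => star U *ᵥ (g *ᵥ (WithLp.equiv 2 (Fin d → 𝕂) v)) with hXdef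
  have hgv : ∀ v, g *ᵥ (WithLp.equiv 2 (Fin d → 𝕂) v) = U *ᵥ X v := by
    intro v
    rw [hXdef]
    simp only []
    rw [Matrix.mulVec_mulVec, hU1, Matrix.one_mulVec]
  have hinner_g : ∀ v w : EuclideanSpace 𝕂 (Fin d),
      (inner 𝕂 (Matrix.toEuclideanLin g v) (Matrix.toEuclideanLin g w) : 𝕂)
        = ∑ i, starRingEnd 𝕂 (X v i) * (X w i) := by
    intro v w
    rw [EuclideanSpace.inner_eq_star_dotProduct, dotProduct_comm, Matrix.ofLp_toEuclideanLin_apply,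
      Matrix.ofLp_toEuclideanLin_apply, ← WithLp.equiv_apply, ← WithLp.equiv_apply, hgv, hgv, fsAux_adj, Matrix.mulVec_mulVec,
      ← Matrix.star_eq_conjTranspose, hU2, Matrix.one_mulVec, fsAux_dot]
  have hinj : Function.Injective g.mulVec := Matrix.mulVec_injective_iff_isUnit.mpr hg
  have hDw : ∀ v : EuclideanSpace 𝕂 (Fin d),
      (Matrix.diagonal (RCLike.ofReal ∘ lam)) *ᵥ (fun i => (((lam i)⁻¹ : ℝ) : 𝕂) * X v i)
        = X v := by
    intro v
    funext i
    rw [Matrix.mulVec_diagonal]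
    show (((lam i : ℝ) : 𝕂)) * ((((lam i)⁻¹ : ℝ) : 𝕂) * X v i) = X v i
    rw [← mul_assoc, ← RCLike.ofReal_mul, mul_inv_cancel₀ (hlampos i).ne', RCLike.ofReal_one,
      one_mul]
  have hrepr : ∀ v : EuclideanSpace 𝕂 (Fin d), WithLp.equiv 2 (Fin d → 𝕂) v
      = gᴴ *ᵥ (U *ᵥ fun i => (((lam i)⁻¹ : ℝ) : 𝕂) * X v i) := by
    intro v
    apply hinj
    rw [Matrix.mulVec_mulVec _ gᴴ U, Matrix.mulVec_mulVec _ g (gᴴ * U),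
      ← Matrix.mul_assoc g gᴴ U,
      (Matrix.isHermitian_mul_conjTranspose_self g).spectral_theorem, Unitary.conjStarAlgAut_apply]
    rw [← hUdef, ← hlamdef]
    rw [Matrix.mul_assoc (U * Matrix.diagonal (RCLike.ofReal ∘ lam)) (star U) U, hU2,
      Matrix.mul_one, ← Matrix.mulVec_mulVec _ U (Matrix.diagonal (RCLike.ofReal ∘ lam)),
      hDw v]
    exact hgv v
  have hinner_v : ∀ v w : EuclideanSpace 𝕂 (Fin d),
      (inner 𝕂 v w : 𝕂) = ∑ i, (((lam i)⁻¹ : ℝ) : 𝕂) * (starRingEnd 𝕂 (X v i) * X w i) := by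
    intro v w
    rw [EuclideanSpace.inner_eq_star_dotProduct, dotProduct_comm, ← WithLp.equiv_apply,
      ← WithLp.equiv_apply, hrepr w, ← fsAux_adj, hgv v, fsAux_adj,
      Matrix.mulVec_mulVec, ← Matrix.star_eq_conjTranspose, hU2, Matrix.one_mulVec, fsAux_dot]
    exact Finset.sum_congr rfl fun i _ => by ring
  -- real quantities
  set x := X v₁ with hxdef
  set y := X v₂ with hydef
  set μ : Fin d → ℝ := fun i => (lam i)⁻¹ with hμdef
  have hμpos : ∀ i, 0 < μ i := fun i => inv_pos.mpr (hlampos i)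
  have hx1 : (∑ i, μ i * ‖x i‖ ^ 2) = 1 := by
    have h' := congrArg RCLike.re (hinner_v v₁ v₁)
    rw [inner_self_eq_norm_sq (𝕜 := 𝕂), h1, one_pow, fsAux_re_sum_weight] at h'
    exact h'.symm
  have hy1 : (∑ i, μ i * ‖y i‖ ^ 2) = 1 := by
    have h' := congrArg RCLike.re (hinner_v v₂ v₂)
    rw [inner_self_eq_norm_sq (𝕜 := 𝕂), h2, one_pow, fsAux_re_sum_weight] at h'
    exact h'.symm
  set A1 : ℝ := ∑ i, ‖x i‖ ^ 2 with hA1def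
  set A2 : ℝ := ∑ i, ‖y i‖ ^ 2 with hA2def
  have hNx : ‖Matrix.toEuclideanLin g v₁‖ ^ 2 = A1 := by
    have h' := congrArg RCLike.re (hinner_g v₁ v₁)
    rw [inner_self_eq_norm_sq (𝕜 := 𝕂), fsAux_re_sum_self] at h'
    exact h'
  have hNy : ‖Matrix.toEuclideanLin g v₂‖ ^ 2 = A2 := by
    have h' := congrArg RCLike.re (hinner_g v₂ v₂)
    rw [inner_self_eq_norm_sq (𝕜 := 𝕂), fsAux_re_sum_self] at h'
    exact h'
  set P : ℝ := ‖(inner 𝕂 (Matrix.toEuclideanLin g v₁) (Matrix.toEuclideanLin g v₂) : 𝕂)‖ with hPdef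
  set p : ℝ := ‖(inner 𝕂 v₁ v₂ : 𝕂)‖ with hpdef
  have hPsum : P = ‖∑ i, starRingEnd 𝕂 (x i) * y i‖ := by rw [hPdef, hinner_g v₁ v₂]
  have hpsum : p = ‖∑ i, ((μ i : ℝ) : 𝕂) * (starRingEnd 𝕂 (x i) * y i)‖ := by
    rw [hpdef, hinner_v v₁ v₂]
  -- core inequality
  have hMpair : ∀ i j, i ≠ j → μ i * μ j ≤ (((s1 * s2) ^ 2)⁻¹ : ℝ) := by
    intro i j hij
    rw [hμdef]
    simp only []
    rw [← mul_inv]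
    exact inv_anti₀ (by positivity) (hpair i j hij)
  have hcore : 1 - p ^ 2 ≤ ((s1 * s2) ^ 2)⁻¹ * (A1 * A2 - P ^ 2) := by
    have h' := fsAux_coreIneq (𝕂 := 𝕂) μ x y (((s1 * s2) ^ 2)⁻¹) hMpair
    rw [hx1, hy1, one_mul] at h'
    rw [hpsum, hPsum]
    exact h'
  have hkey2 : (s1 * s2) ^ 2 * (1 - p ^ 2) ≤ A1 * A2 - P ^ 2 := by
    have hpos : (0:ℝ) < (s1 * s2) ^ 2 := by positivity
    calc (s1 * s2) ^ 2 * (1 - p ^ 2)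
        ≤ (s1 * s2) ^ 2 * (((s1 * s2) ^ 2)⁻¹ * (A1 * A2 - P ^ 2)) :=
          mul_le_mul_of_nonneg_left hcore hpos.le
      _ = A1 * A2 - P ^ 2 := by field_simp
  -- bounds on A1, A2
  have hA1le : A1 ≤ S ^ 2 := by
    have h' : (S ^ 2)⁻¹ * A1 ≤ 1 := by
      rw [← hx1, hA1def, Finset.mul_sum]
      refine Finset.sum_le_sum fun i _ => ?_
      exact mul_le_mul_of_nonneg_right (inv_anti₀ (hlampos i) (hlam_le i)) (by positivity)
    calc A1 = S ^ 2 * ((S ^ 2)⁻¹ * A1) := by field_simp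
      _ ≤ S ^ 2 * 1 := mul_le_mul_of_nonneg_left h' (by positivity)
      _ = S ^ 2 := mul_one _
  have hA2le : A2 ≤ S ^ 2 := by
    have h' : (S ^ 2)⁻¹ * A2 ≤ 1 := by
      rw [← hy1, hA2def, Finset.mul_sum]
      refine Finset.sum_le_sum fun i _ => ?_
      exact mul_le_mul_of_nonneg_right (inv_anti₀ (hlampos i) (hlam_le i)) (by positivity)
    calc A2 = S ^ 2 * ((S ^ 2)⁻¹ * A2) := by field_simp
      _ ≤ S ^ 2 * 1 := mul_le_mul_of_nonneg_left h' (by positivity)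
      _ = S ^ 2 := mul_one _
  have hA1pos : 0 < A1 := by
    have h' : (1:ℝ) ≤ (s1 ^ 2)⁻¹ * A1 := by
      rw [← hx1, hA1def, Finset.mul_sum]
      refine Finset.sum_le_sum fun i _ => ?_
      exact mul_le_mul_of_nonneg_right (inv_anti₀ (by positivity) (hlam_ge i))
        (by positivity)
    have h'' : s1 ^ 2 ≤ A1 := by
      have h3 := mul_le_mul_of_nonneg_left h' (sq_nonneg s1)
      rw [mul_one] at h3
      calc s1 ^ 2 ≤ s1 ^ 2 * ((s1 ^ 2)⁻¹ * A1) := h3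
        _ = A1 := by field_simp
    exact lt_of_lt_of_le (pow_pos hs1pos 2) h''
  have hA2pos : 0 < A2 := by
    have h' : (1:ℝ) ≤ (s1 ^ 2)⁻¹ * A2 := by
      rw [← hy1, hA2def, Finset.mul_sum]
      refine Finset.sum_le_sum fun i _ => ?_
      exact mul_le_mul_of_nonneg_right (inv_anti₀ (by positivity) (hlam_ge i))
        (by positivity)
    have h'' : s1 ^ 2 ≤ A2 := by
      have h3 := mul_le_mul_of_nonneg_left h' (sq_nonneg s1)
      rw [mul_one] at h3
      calc s1 ^ 2 ≤ s1 ^ 2 * ((s1 ^ 2)⁻¹ * A2) := h3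
        _ = A2 := by field_simp
    exact lt_of_lt_of_le (pow_pos hs1pos 2) h''
  set D1 : ℝ := ‖Matrix.toEuclideanLin g v₁‖ with hD1def
  set D2 : ℝ := ‖Matrix.toEuclideanLin g v₂‖ with hD2def
  have hD1pos : 0 < D1 := by
    rcases (norm_nonneg (Matrix.toEuclideanLin g v₁)).eq_or_lt with h | h
    · exfalso
      have hz : A1 = 0 := by rw [← hNx, hD1def, ← h]; norm_num
      exact hA1pos.ne' hz
    · exact h
  have hD2pos : 0 < D2 := by
    rcases (norm_nonneg (Matrix.toEuclideanLin g v₂)).eq_or_lt with h | h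
    · exfalso
      have hz : A2 = 0 := by rw [← hNy, hD2def, ← h]; norm_num
      exact hA2pos.ne' hz
    · exact h
  have hD1S : D1 ≤ S := le_of_pow_le_pow_left₀ two_ne_zero hSpos.le (by rw [hNx]; exact hA1le)
  have hD2S : D2 ≤ S := le_of_pow_le_pow_left₀ two_ne_zero hSpos.le (by rw [hNy]; exact hA2le)
  have hCS : P ≤ D1 * D2 := norm_inner_le_norm _ _
  have hp0 : 0 ≤ p := norm_nonneg _
  have hp1 : p ≤ 1 := by
    have := norm_inner_le_norm (𝕜 := 𝕂) v₁ v₂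
    rw [h1, h2, one_mul] at this
    exact this
  have hP0 : 0 ≤ P := norm_nonneg _
  -- distances
  set t : ℝ := P / (D1 * D2) with htdef
  have hdg : dProj (Matrix.toEuclideanLin g v₁) (Matrix.toEuclideanLin g v₂) = Real.arccos t := by
    rw [dProj, ← hD1def, ← hD2def, ← hPdef]
  have hdv : dProj v₁ v₂ = Real.arccos p := by
    rw [dProj, h1, h2, one_mul, div_one]
  have ht0 : 0 ≤ t := div_nonneg hP0 (by positivity)
  have hQ : (D1 * D2) ^ 2 = A1 * A2 := by rw [mul_pow, hNx, hNy]
  have hGg0 : 0 ≤ A1 * A2 - P ^ 2 := by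
    rw [← hQ]
    have h5 : P ^ 2 ≤ (D1 * D2) ^ 2 := pow_le_pow_left₀ hP0 hCS 2
    linarith
  -- the chain
  have c2 : Real.sin (Real.arccos t) = Real.sqrt (1 - t ^ 2) := Real.sin_arccos t
  have c1 : Real.sin (Real.arccos t) ≤ Real.arccos t := Real.sin_le (Real.arccos_nonneg t)
  have c3 : Real.sqrt (1 - t ^ 2) = Real.sqrt (A1 * A2 - P ^ 2) / (D1 * D2) := by
    have h' : 1 - t ^ 2 = (A1 * A2 - P ^ 2) / (D1 * D2) ^ 2 := by
      rw [htdef, ← hQ]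
      field_simp
    rw [h', Real.sqrt_div hGg0, Real.sqrt_sq (by positivity)]
  have c4 : s1 * s2 * Real.sqrt (1 - p ^ 2) ≤ Real.sqrt (A1 * A2 - P ^ 2) := by
    have h' : s1 * s2 * Real.sqrt (1 - p ^ 2) = Real.sqrt ((s1 * s2) ^ 2 * (1 - p ^ 2)) := by
      rw [Real.sqrt_mul (sq_nonneg _), Real.sqrt_sq (by positivity)]
    rw [h']
    exact Real.sqrt_le_sqrt hkey2
  have c5 : 2 / Real.pi * Real.arccos p ≤ Real.sqrt (1 - p ^ 2) := by
    rw [← Real.sin_arccos]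
    exact Real.mul_le_sin (Real.arccos_nonneg p) (Real.arccos_le_pi_div_two.mpr hp0)
  have c6 : Real.sqrt (A1 * A2 - P ^ 2) / (S ^ 2) ≤ Real.sqrt (A1 * A2 - P ^ 2) / (D1 * D2) := by
    have hQS : D1 * D2 ≤ S ^ 2 := by
      calc D1 * D2 ≤ S * S := mul_le_mul hD1S hD2S hD2pos.le hSpos.le
        _ = S ^ 2 := (sq S).symm
    exact div_le_div_of_nonneg_left (Real.sqrt_nonneg _) (mul_pos hD1pos hD2pos) hQS
  rw [hdg, hdv]
  have main : 2 / Real.pi * (s1 * s2 / S ^ 2) * Real.arccos p ≤ Real.arccos t := by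
    calc 2 / Real.pi * (s1 * s2 / S ^ 2) * Real.arccos p
        = (s1 * s2) * (2 / Real.pi * Real.arccos p) / S ^ 2 := by ring
      _ ≤ (s1 * s2) * Real.sqrt (1 - p ^ 2) / S ^ 2 := by
          exact div_le_div_of_nonneg_right
            (mul_le_mul_of_nonneg_left c5 (mul_nonneg hs1pos.le hs2pos.le)) (pow_pos hSpos 2).le
      _ ≤ Real.sqrt (A1 * A2 - P ^ 2) / S ^ 2 := by
          exact div_le_div_of_nonneg_right c4 (pow_pos hSpos 2).le
      _ ≤ Real.sqrt (A1 * A2 - P ^ 2) / (D1 * D2) := c6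
      _ = Real.sqrt (1 - t ^ 2) := c3.symm
      _ = Real.sin (Real.arccos t) := c2.symm
      _ ≤ Real.arccos t := c1
  exact main
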